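/- Let ℓ ≥ 3 be odd, ξ = exp(2πi/ℓ). For μ, μ' ∈ ℂ² with α = (μ₁−ℓ+1, μ₂+ℓ/2), α' = (μ'₁−ℓ+1, μ'₂+ℓ/2), define S'(μ,μ') = ξ^{−4α₂α'₂ − 2(α₂α'₁ + α₁α'₂)} · {ℓα'₁}{α'₂}{α'₂+α'₁}/{α'₁} and d(μ) = {α₁}/(ℓ{ℓα₁}{α₂}{α₁+α₂}). Then d(μ')·S'(μ,μ') = d(μ)·S'(μ',μ), whenever all the quantities are defined (denominators nonzero). -/

import Mathlib

/-- `ξ^x := exp(2πix/ℓ)` -/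
noncomputable def qexp (ℓ : ℕ) (x : ℂ) : ℂ :=
  Complex.exp (2 * Real.pi * Complex.I * x / ℓ)

/-- `{x} := ξ^x − ξ^{-x}` -/
noncomputable def br (ℓ : ℕ) (x : ℂ) : ℂ := qexp ℓ x - qexp ℓ (-x)

/-- modified dimension, as a function of the shifted weight `α` -/
noncomputable def dd (ℓ : ℕ) (α₁ α₂ : ℂ) : ℂ :=
  br ℓ α₁ / ((ℓ : ℂ) * br ℓ ((ℓ : ℂ) * α₁) * br ℓ α₂ * br ℓ (α₁ + α₂))

/-- `S'(μ,μ')`, as a function of the shifted weights `α`, `α'` -/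
noncomputable def Sp (ℓ : ℕ) (α₁ α₂ α'₁ α'₂ : ℂ) : ℂ :=
  qexp ℓ (-4 * α₂ * α'₂ - 2 * (α₂ * α'₁ + α₁ * α'₂))
    * (br ℓ ((ℓ : ℂ) * α'₁) * br ℓ α'₂ * br ℓ (α'₂ + α'₁) / br ℓ α'₁)

theorem stmt5 (ℓ : ℕ) (h3 : 3 ≤ ℓ) (hodd : Odd ℓ) (μ₁ μ₂ μ'₁ μ'₂ α₁ α₂ α'₁ α'₂ : ℂ)
    (hα₁ : α₁ = μ₁ - ℓ + 1) (hα₂ : α₂ = μ₂ + (ℓ : ℂ) / 2)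
    (hα'₁ : α'₁ = μ'₁ - ℓ + 1) (hα'₂ : α'₂ = μ'₂ + (ℓ : ℂ) / 2)
    (h1 : br ℓ α₁ ≠ 0) (h2 : br ℓ ((ℓ : ℂ) * α₁) ≠ 0)
    (h3' : br ℓ α₂ ≠ 0) (h4 : br ℓ (α₁ + α₂) ≠ 0)
    (h5 : br ℓ α'₁ ≠ 0) (h6 : br ℓ ((ℓ : ℂ) * α'₁) ≠ 0)
    (h7 : br ℓ α'₂ ≠ 0) (h8 : br ℓ (α'₁ + α'₂) ≠ 0) :
    dd ℓ α'₁ α'₂ * Sp ℓ α₁ α₂ α'₁ α'₂ = dd ℓ α₁ α₂ * Sp ℓ α'₁ α'₂ α₁ α₂ := by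
  have hℓ : (ℓ:ℂ) ≠ 0 := Nat.cast_ne_zero.mpr (by omega)
  have key : ∀ a₁ a₂ b₁ b₂ : ℂ, br ℓ b₁ ≠ 0 → br ℓ ((ℓ:ℂ) * b₁) ≠ 0 →
      br ℓ b₂ ≠ 0 → br ℓ (b₁ + b₂) ≠ 0 →
      dd ℓ b₁ b₂ * Sp ℓ a₁ a₂ b₁ b₂
        = qexp ℓ (-4 * a₂ * b₂ - 2 * (a₂ * b₁ + a₁ * b₂)) / ℓ := by
    intro a₁ a₂ b₁ b₂ k1 k2 k3 k4
    unfold dd Sp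
    rw [add_comm b₂ b₁]
    set B := br ℓ b₁
    set X := br ℓ ((ℓ:ℂ) * b₁)
    set Y := br ℓ b₂
    set Z := br ℓ (b₁ + b₂)
    field_simp
  rw [key α₁ α₂ α'₁ α'₂ h5 h6 h7 h8, key α'₁ α'₂ α₁ α₂ h1 h2 h3' h4]
  congr 2
  ring
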